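/- Suppose Y ⊆ ℕ, (ψ, E) is a Y-computable presentation of a total combinatory algebra, and f : ℕ → ℕ is a weak embedding of Kleene's first model K₁ into (ψ, E). Then Y is not computable. (In particular, K₁ has no computable weak completion.) -/

import Mathlib

/-- Partial recursive functions relative to an oracle `O : ℕ →. ℕ`
(relativization of Mathlib's `Nat.Partrec`). -/
inductive RecursiveInOracle (O : ℕ →. ℕ) : (ℕ →. ℕ) → Prop
  | zero : RecursiveInOracle O (pure 0)
  | succ : RecursiveInOracle O ↑Nat.succ
  | left : RecursiveInOracle O ↑fun n : ℕ => n.unpair.1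
  | right : RecursiveInOracle O ↑fun n : ℕ => n.unpair.2
  | oracle : RecursiveInOracle O O
  | pair {f g} : RecursiveInOracle O f → RecursiveInOracle O g →
      RecursiveInOracle O fun n => Nat.pair <$> f n <*> g n
  | comp {f g} : RecursiveInOracle O f → RecursiveInOracle O g →
      RecursiveInOracle O fun n => g n >>= f
  | prec {f g} : RecursiveInOracle O f → RecursiveInOracle O g →
      RecursiveInOracle O (Nat.unpaired fun a n =>
        n.rec (f a) fun y IH => do let i ← IH; g (Nat.pair a (Nat.pair y i)))
  | rfind {f} : RecursiveInOracle O f →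
      RecursiveInOracle O fun a => Nat.rfind fun n => (fun m => m = 0) <$> f (Nat.pair a n)

open scoped Classical in
/-- The characteristic function of a set `Y ⊆ ℕ`, as a partial function. -/
noncomputable def chi (Y : Set ℕ) : ℕ →. ℕ :=
  fun n => Part.some (if n ∈ Y then 1 else 0)

/-- The `e`-th partial computable function on `ℕ`. -/
def phi (e : ℕ) : ℕ →. ℕ :=
  Nat.Partrec.Code.eval (Denumerable.ofNat Nat.Partrec.Code e)

/-- `(ψ, E)` is a `Y`-computable presentation of a total combinatory algebra:
`ψ` is total and recursive in `Y`, `E` is an equivalence relation decidable in `Y`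
which is a congruence for `ψ`, and there are combinators `k`, `s`. -/
structure YPresentation (Y : Set ℕ) (ψ : ℕ → ℕ → ℕ) (E : ℕ → ℕ → Prop) : Prop where
  psi_rec : RecursiveInOracle (chi Y) (fun n : ℕ => Part.some (ψ n.unpair.1 n.unpair.2))
  equiv : Equivalence E
  E_rec : RecursiveInOracle (chi Y) (chi {n : ℕ | E n.unpair.1 n.unpair.2})
  congruence : ∀ {n n' m m'}, E n n' → E m m' → E (ψ n m) (ψ n' m')
  comb : ∃ k s : ℕ, ∀ a b c : ℕ,
    E (ψ (ψ k a) b) a ∧ E (ψ (ψ (ψ s a) b) c) (ψ (ψ a c) (ψ b c))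

/-- `f` is a weak embedding of Kleene's first model `K₁` into `(ψ, E)`. -/
def WeakEmb (ψ : ℕ → ℕ → ℕ) (E : ℕ → ℕ → Prop) (f : ℕ → ℕ) : Prop :=
  (∀ n m, E (f n) (f m) → n = m) ∧
  ∀ a b c : ℕ, phi a b = Part.some c → E (ψ (f a) (f b)) (f c)

/-- Relative computability in a partial recursive oracle is plain partial recursiveness. -/
lemma RecursiveInOracle.partrec_of_oracle {O : ℕ →. ℕ} (hO : Nat.Partrec O) {h : ℕ →. ℕ}
    (hh : RecursiveInOracle O h) : Nat.Partrec h := by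
  induction hh with
  | zero => exact Nat.Partrec.zero
  | succ => exact Nat.Partrec.succ
  | left => exact Nat.Partrec.left
  | right => exact Nat.Partrec.right
  | oracle => exact hO
  | pair _ _ ih1 ih2 => exact ih1.pair ih2
  | comp _ _ ih1 ih2 => exact ih1.comp ih2
  | prec _ _ ih1 ih2 => exact ih1.prec ih2
  | rfind _ ih => exact ih.rfind

lemma chi_partrec_of_computable {Y : Set ℕ} (hY : ComputablePred (· ∈ Y)) :
    Nat.Partrec (chi Y) := by
  obtain ⟨D, hD⟩ := hY
  have h1 : Computable fun n : ℕ => (if n ∈ Y then 1 else 0 : ℕ) := by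
    have := Computable.cond hD (Computable.const (1 : ℕ)) (Computable.const (0 : ℕ))
    refine this.of_eq fun n => ?_
    by_cases h : n ∈ Y <;> simp [h]
  have h2 : Partrec (chi Y) := by
    refine h1.partrec.of_eq fun n => ?_
    classical
    simp only [chi]
    by_cases h : n ∈ Y <;> simp [h]
  exact Partrec.nat_iff.1 h2

/-- A `Y`-recursive total `ℕ`-valued partial function is computable when `Y` is computable. -/
lemma computable_of_recursiveIn {Y : Set ℕ} (hY : ComputablePred (· ∈ Y)) {F : ℕ → ℕ}
    (h : RecursiveInOracle (chi Y) (fun n => Part.some (F n))) : Computable F := by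
  have h1 : Nat.Partrec (fun n => Part.some (F n)) :=
    h.partrec_of_oracle (chi_partrec_of_computable hY)
  have h2 : Partrec (fun n : ℕ => Part.some (F n)) := Partrec.nat_iff.2 h1
  exact h2

theorem K1_no_computable_completion (Y : Set ℕ) (ψ : ℕ → ℕ → ℕ) (E : ℕ → ℕ → Prop)
    (hP : YPresentation Y ψ E) (f : ℕ → ℕ) (hf : WeakEmb ψ E f) :
    ¬ ComputablePred (· ∈ Y) := by
  intro hY
  classical
  obtain ⟨hinj, hsim⟩ := hf
  -- ψ (uncurried) is computable
  have hΨ : Computable (fun n : ℕ => ψ n.unpair.1 n.unpair.2) :=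
    computable_of_recursiveIn hY hP.psi_rec
  -- a computable characteristic function for E
  set Echar : ℕ → ℕ := fun n => if E n.unpair.1 n.unpair.2 then 1 else 0 with hEchar
  have hE : Computable Echar := by
    apply computable_of_recursiveIn hY
    have heq : (fun n => Part.some (Echar n)) = chi {n : ℕ | E n.unpair.1 n.unpair.2} := by
      funext n
      simp only [chi, Set.mem_setOf_eq, hEchar]
    exact heq ▸ hP.E_rec
  have hEchar_spec : ∀ n m : ℕ, Echar (Nat.pair n m) = 1 ↔ E n m := by
    intro n m
    simp only [hEchar, Nat.unpair_pair]
    by_cases h : E n m <;> simp [h]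
  -- a code for the successor function
  obtain ⟨cσ, hcσ⟩ := Nat.Partrec.Code.exists_code.1 Nat.Partrec.succ
  set σ : ℕ := Encodable.encode cσ with hσdef
  have hσ : ∀ n : ℕ, phi σ n = Part.some (n + 1) := by
    intro n
    simp [phi, hσdef, Denumerable.ofNat_encode, hcσ]
  -- the computable copy of f
  set g : ℕ → ℕ := fun n => Nat.rec (f 0) (fun _ ih => ψ (f σ) ih) n with hgdef
  have hg : Computable g := by
    have step : Computable (fun p : ℕ × ℕ => ψ (f σ) p.2) := by
      have : Computable (fun p : ℕ × ℕ => Nat.pair (f σ) p.2) :=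
        Primrec₂.natPair.to_comp.comp (Computable.const (f σ)) Computable.snd
      exact (hΨ.comp this).of_eq fun p => by simp
    exact (Computable.nat_rec Computable.id (Computable.const (f 0))
      (step.comp Computable.snd).to₂).of_eq fun n => by
        induction n with
        | zero => rfl
        | succ k ih => simp_all [hgdef]
  -- g agrees with f up to E
  have hgf : ∀ n, E (g n) (f n) := by
    intro n
    induction n with
    | zero => exact hP.equiv.refl _
    | succ k ih =>
      have h1 : E (ψ (f σ) (g k)) (ψ (f σ) (f k)) :=
        hP.congruence (hP.equiv.refl _) ih
      have h2 : E (ψ (f σ) (f k)) (f (k + 1)) := hsim σ k (k + 1) (hσ k)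
      exact hP.equiv.trans h1 h2
  -- g inherits injectivity and simulation
  have hginj : ∀ n m, E (g n) (g m) → n = m := by
    intro n m h
    exact hinj n m (hP.equiv.trans (hP.equiv.trans (hP.equiv.symm (hgf n)) h) (hgf m))
  have hgsim : ∀ a b c : ℕ, phi a b = Part.some c → E (ψ (g a) (g b)) (g c) := by
    intro a b c h
    have h1 : E (ψ (g a) (g b)) (ψ (f a) (f b)) := hP.congruence (hgf a) (hgf b)
    exact hP.equiv.trans (hP.equiv.trans h1 (hsim a b c h)) (hP.equiv.symm (hgf c))
  -- the diagonal function
  set h : ℕ → ℕ := fun x => Echar (Nat.pair (ψ (g x) (g x)) (g 0)) with hhdef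
  have hh : Computable h := by
    have h1 : Computable (fun x : ℕ => ψ (g x) (g x)) := by
      have : Computable (fun x : ℕ => Nat.pair (g x) (g x)) :=
        Primrec₂.natPair.to_comp.comp hg hg
      exact (hΨ.comp this).of_eq fun x => by simp
    exact hE.comp (Primrec₂.natPair.to_comp.comp h1 (Computable.const (g 0)))
  obtain ⟨ch, hch⟩ := Nat.Partrec.Code.exists_code.1 (Partrec.nat_iff.1 hh.partrec)
  set e : ℕ := Encodable.encode ch with hedef
  have hphie : phi e e = Part.some (h e) := by
    simp only [phi, hedef, Denumerable.ofNat_encode, hch]; rfl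
  have hdiag : E (ψ (g e) (g e)) (g (h e)) := hgsim e e (h e) hphie
  by_cases hcase : E (ψ (g e) (g e)) (g 0)
  · have hval : h e = 1 := by
      simp only [hhdef]
      exact (hEchar_spec _ _).2 hcase
    rw [hval] at hdiag
    have : (0 : ℕ) = 1 := hginj 0 1 (hP.equiv.trans (hP.equiv.symm hcase) hdiag)
    exact absurd this (by norm_num)
  · have hval : h e = 0 := by
      simp only [hhdef, hEchar]
      rw [Nat.unpair_pair]
      simp [hcase]
    rw [hval] at hdiag
    exact hcase hdiag
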